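/- For all d ≥ 1 and n: if there exists an N-point set in ℝ² in d-general position containing no n-point dth-order monotone subset, then there exists a sequence of N points in ℝ^d in general position (no d+1 of them on a common hyperplane) containing no order-type homogeneous subsequence of n points. Consequently OT_d(n) ≥ ES_d(n). -/

import Mathlib

open Polynomial Matrix


/-- The `m`-th divided difference `Δ_m(p₁, …, p_{m+1})` of a tuple of points in the plane. -/
noncomputable def divdiff : (m : ℕ) → (Fin (m + 1) → ℝ × ℝ) → ℝ
  | 0, p => (p 0).2
  | m + 1, p =>
      (divdiff m (fun i => p i.succ) - divdiff m (fun i => p i.castSucc)) /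
        ((p (Fin.last (m + 1))).1 - (p 0).1)

/-- A finite planar point set is in `k`-general position if its points have pairwise distinct
`x`-coordinates and no `k+1` of its points lie on the graph of a polynomial of degree
at most `k-1`. -/
def KGenPos (k : ℕ) (P : Finset (ℝ × ℝ)) : Prop :=
  (∀ p ∈ P, ∀ q ∈ P, p.1 = q.1 → p = q) ∧
  ∀ g : Polynomial ℝ, g.degree < (k : WithBot ℕ) →
    ∀ T ⊆ P, (∀ p ∈ T, Polynomial.eval p.1 g = p.2) → T.card ≤ k

/-- A planar point set `S` is `k`-th order monotone if the `k`-th divided difference of every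
`(k+1)`-tuple of its points (listed in increasing order of `x`-coordinates) is nonnegative,
or every such divided difference is nonpositive. -/
def KOrderMonotone (k : ℕ) (S : Finset (ℝ × ℝ)) : Prop :=
  (∀ q : Fin (k + 1) → ℝ × ℝ, (∀ i, q i ∈ S) →
      StrictMono (fun i => (q i).1) → 0 ≤ divdiff k q) ∨
  (∀ q : Fin (k + 1) → ℝ × ℝ, (∀ i, q i ∈ S) →
      StrictMono (fun i => (q i).1) → divdiff k q ≤ 0)

/-- `ES k n` : the least `N` such that every `N`-point planar set in `k`-general position
contains an `n`-point `k`-th order monotone subset. -/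
noncomputable def ES (k n : ℕ) : ℕ :=
  sInf {N | ∀ P : Finset (ℝ × ℝ), P.card = N → KGenPos k P →
    ∃ S ⊆ P, S.card = n ∧ KOrderMonotone k S}

/-- The matrix `M(q₁, …, q_{d+1})` whose `j`-th column is `1` followed by the `d`
coordinates of `qⱼ ∈ ℝ^d`. -/
def otMat {d : ℕ} (q : Fin (d + 1) → Fin d → ℝ) : Matrix (Fin (d + 1)) (Fin (d + 1)) ℝ :=
  Matrix.of fun r c => Fin.cases (1 : ℝ) (fun r' => q c r') r

/-- A sequence of points in `ℝ^d` is in general position if no `d+1` of its points lie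
on a common hyperplane. -/
def GenPosSeq {d N : ℕ} (q : Fin N → Fin d → ℝ) : Prop :=
  ∀ (a : Fin d → ℝ) (b : ℝ), a ≠ 0 →
    ∀ T : Finset (Fin N), (∀ i ∈ T, ∑ j, a j * q i j = b) → T.card ≤ d

/-- A sequence of points in `ℝ^d` is order-type homogeneous if all its `(d+1)`-subtuples
(taken in increasing index order) induce determinants of the same sign. -/
def OTHomog {d N : ℕ} (q : Fin N → Fin d → ℝ) : Prop :=
  ∃ ε : ℝ, ∀ σ : Fin (d + 1) → Fin N, StrictMono σ →
    Real.sign (Matrix.det (otMat fun i => q (σ i))) = ε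

/-- `OT d n` : the least `N` such that every sequence of `N` points of `ℝ^d` in general
position contains an order-type homogeneous subsequence of `n` points. -/
noncomputable def OT (d n : ℕ) : ℕ :=
  sInf {N | ∀ q : Fin N → Fin d → ℝ, GenPosSeq q →
    ∃ ι : Fin n → Fin N, StrictMono ι ∧ OTHomog (q ∘ ι)}

theorem divdiff_add (m : ℕ) (x y z : Fin (m+1) → ℝ) :
    divdiff m (fun i => (x i, y i + z i)) =
      divdiff m (fun i => (x i, y i)) + divdiff m (fun i => (x i, z i)) := by
  induction m with
  | zero => simp [divdiff]
  | succ m ih =>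
    simp only [divdiff]
    rw [ih (fun i => x i.succ) (fun i => y i.succ) (fun i => z i.succ),
        ih (fun i => x i.castSucc) (fun i => y i.castSucc) (fun i => z i.castSucc)]
    ring

theorem divdiff_const (m : ℕ) (c : ℝ) (x : Fin (m+1) → ℝ) :
    divdiff m (fun i => (x i, c)) = if m = 0 then c else 0 := by
  induction m with
  | zero => simp [divdiff]
  | succ m ih =>
    simp only [divdiff]
    rw [ih (fun i => x i.succ), ih (fun i => x i.castSucc)]
    simp

theorem divdiff_rec (m : ℕ) (x y : Fin (m+2) → ℝ) :
    divdiff (m+1) (fun i => (x i, y i)) =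
      (divdiff m (fun i => (x i.succ, y i.succ)) -
        divdiff m (fun i => (x i.castSucc, y i.castSucc))) /
        (x (Fin.last (m+1)) - x 0) := by
  simp [divdiff]

theorem divdiff_linfactor : ∀ (m : ℕ) (x : Fin (m+2) → ℝ), Function.Injective x →
    ∀ (a : ℝ) (z : Fin (m+2) → ℝ),
    divdiff (m+1) (fun i => (x i, (x i - a) * z i)) =
      divdiff m (fun i => (x i.succ, z i.succ)) +
        (x 0 - a) * divdiff (m+1) (fun i => (x i, z i)) := by
  intro m
  induction m with
  | zero =>
    intro x hx a z
    have h : x 1 - x 0 ≠ 0 := sub_ne_zero.mpr (hx.ne (by decide))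
    rw [divdiff_rec 0 x (fun i => (x i - a) * z i), divdiff_rec 0 x z]
    have hl : Fin.last 1 = 1 := rfl
    simp only [divdiff, hl, Fin.succ_zero_eq_one, Fin.castSucc_zero]
    field_simp
    ring
  | succ m ih =>
    intro x hx a z
    have hL0 : x (Fin.last (m+2)) - x 0 ≠ 0 :=
      sub_ne_zero.mpr (hx.ne (by simp [Fin.ext_iff]))
    have hL1 : x (Fin.last (m+2)) - x 1 ≠ 0 :=
      sub_ne_zero.mpr (hx.ne (by simp [Fin.ext_iff]))
    rw [divdiff_rec (m+1) x (fun i => (x i - a) * z i), divdiff_rec (m+1) x z]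
    rw [ih (fun i => x i.succ) (hx.comp (Fin.succ_injective _)) a (fun i => z i.succ)]
    rw [ih (fun i => x i.castSucc) (hx.comp (Fin.castSucc_injective _)) a
      (fun i => z i.castSucc)]
    have hA : divdiff (m+1) (fun i => (x i.succ, z i.succ)) =
        (divdiff m (fun i => (x i.succ.succ, z i.succ.succ)) -
          divdiff m (fun i => (x i.succ.castSucc, z i.succ.castSucc))) /
          (x (Fin.last (m+2)) - x 1) := by
      rw [divdiff_rec m (fun i => x i.succ) (fun i => z i.succ)]
      simp only [Fin.succ_last, Fin.succ_castSucc, Fin.succ_zero_eq_one]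
    rw [hA]
    simp only [Fin.succ_castSucc, Fin.succ_zero_eq_one, Fin.castSucc_zero]
    generalize divdiff m (fun i => (x i.succ.succ, z i.succ.succ)) = D
    generalize divdiff m (fun i => (x i.succ.castSucc, z i.succ.castSucc)) = C
    generalize divdiff (m+1) (fun i => (x i.castSucc, z i.castSucc)) = B
    field_simp
    ring

theorem divdiff_poly : ∀ (m : ℕ) (x : Fin (m+1) → ℝ), Function.Injective x →
    ∀ g : Polynomial ℝ, g.natDegree ≤ m →
    divdiff m (fun i => (x i, g.eval (x i))) = g.coeff m := by
  intro m
  induction m with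
  | zero =>
    intro x hx g hg
    obtain ⟨c, rfl⟩ := Polynomial.natDegree_eq_zero.mp (Nat.le_zero.mp hg)
    simp [divdiff]
  | succ m ih =>
    intro x hx g hg
    obtain ⟨g₁, hg₁⟩ : X - C (x 0) ∣ g - C (g.eval (x 0)) :=
      Polynomial.X_sub_C_dvd_sub_C_eval
    have hgeq : g = C (g.eval (x 0)) + (X - C (x 0)) * g₁ := by
      rw [← hg₁]; ring
    have hg₁deg : g₁.natDegree ≤ m := by
      by_cases h0 : g₁ = 0
      · simp [h0]
      · have h1 : ((X - C (x 0)) * g₁).natDegree = 1 + g₁.natDegree := by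
          rw [Polynomial.natDegree_mul (Polynomial.X_sub_C_ne_zero (x 0)) h0,
            Polynomial.natDegree_X_sub_C]
        have h2 : (g - C (g.eval (x 0))).natDegree ≤ m + 1 := by
          apply le_trans (Polynomial.natDegree_sub_le _ _)
          simp [hg]
        rw [← hg₁] at h1
        omega
    have hcoeff : g.coeff (m+1) = g₁.coeff m := by
      have : g.coeff (m+1) = (g - C (g.eval (x 0))).coeff (m+1) := by
        simp [Polynomial.coeff_C]
      rw [this, hg₁, sub_mul, Polynomial.coeff_sub, Polynomial.coeff_X_mul,
        Polynomial.coeff_C_mul, Polynomial.coeff_eq_zero_of_natDegree_lt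
          (lt_of_le_of_lt hg₁deg (Nat.lt_succ_self m)), mul_zero, sub_zero]
    have hvals : ∀ i, g.eval (x i) = g.eval (x 0) + (x i - x 0) * g₁.eval (x i) := by
      intro i
      conv_lhs => rw [hgeq]
      simp
    have h1 : divdiff (m+1) (fun i => (x i, g.eval (x i))) =
        divdiff (m+1) (fun i => (x i, g.eval (x 0))) +
        divdiff (m+1) (fun i => (x i, (x i - x 0) * g₁.eval (x i))) := by
      rw [← divdiff_add]
      congr 1
      funext i
      rw [hvals i]
    rw [h1, divdiff_const, if_neg (Nat.succ_ne_zero m), zero_add,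
      divdiff_linfactor m x hx (x 0) (fun i => g₁.eval (x i)), sub_self, zero_mul, add_zero,
      ih (fun i => x i.succ) (hx.comp (Fin.succ_injective _)) g₁ hg₁deg, hcoeff]

theorem otMat_lift (e : ℕ) (x y : Fin (e+2) → ℝ) :
    otMat (fun c => Fin.snoc (fun j : Fin e => (x c) ^ ((j:ℕ)+1)) (y c)) =
      ((Matrix.vandermonde x)ᵀ).updateRow (Fin.last (e+1)) y := by
  funext r c
  refine Fin.cases ?_ (fun r' => ?_) r
  · have h0 : (0 : Fin (e+2)) ≠ Fin.last (e+1) := by simp [Fin.ext_iff]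
    simp [otMat, Matrix.updateRow_apply, h0, Matrix.vandermonde]
  · refine Fin.lastCases ?_ (fun j => ?_) r'
    · simp only [otMat, Matrix.of_apply, Fin.cases_succ, Fin.snoc_last]
      rw [Fin.succ_last, Matrix.updateRow_self]
    · have hne : (j.castSucc).succ ≠ Fin.last (e+1) := by
        simp [Fin.ext_iff]; omega
      simp [otMat, Matrix.updateRow_apply, hne, Matrix.vandermonde, Fin.snoc_castSucc]

theorem det_lift (e : ℕ) (x y : Fin (e+2) → ℝ) (hx : Function.Injective x) :
    (otMat (fun c => Fin.snoc (fun j : Fin e => (x c) ^ ((j:ℕ)+1)) (y c))).det =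
      (∏ i : Fin (e+2), ∏ j ∈ Finset.Ioi i, (x j - x i)) *
        divdiff (e+1) (fun i => (x i, y i)) := by
  set g : Polynomial ℝ := Lagrange.interpolate Finset.univ x y with hgdef
  have hy : ∀ i, y i = g.eval (x i) := fun i =>
    (Lagrange.eval_interpolate_at_node y hx.injOn (Finset.mem_univ i)).symm
  have hdeg : g.natDegree < e + 2 := by
    by_cases h0 : g = 0
    · simp [h0]
    · rw [Polynomial.natDegree_lt_iff_degree_lt h0]
      have := Lagrange.degree_interpolate_lt y hx.injOn (s := Finset.univ)
      simpa [hgdef] using this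
  set A : Matrix (Fin (e+2)) (Fin (e+2)) ℝ := (Matrix.vandermonde x)ᵀ with hA
  have hyrow : y = ∑ k : Fin (e+2), g.coeff (k:ℕ) • A k := by
    funext c
    rw [hy c]
    conv_lhs => rw [Polynomial.as_sum_range' g (e+2) hdeg]
    rw [Polynomial.eval_finset_sum, ← Fin.sum_univ_eq_sum_range
      (fun k => Polynomial.eval (x c) (Polynomial.monomial k (g.coeff k)))]
    simp [hA, Matrix.vandermonde, mul_comm]
  have hdd : divdiff (e+1) (fun i => (x i, y i)) = g.coeff (e+1) := by
    have : (fun i => (x i, y i)) = fun i => (x i, g.eval (x i)) := by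
      funext i; rw [hy i]
    rw [this, divdiff_poly (e+1) x hx g (Nat.lt_succ_iff.mp hdeg)]
  rw [otMat_lift, hdd]
  conv_lhs => rw [hyrow]
  rw [Matrix.det_updateRow_sum A (Fin.last (e+1)) (fun k => g.coeff k)]
  simp [hA, Matrix.det_transpose, Matrix.det_vandermonde, Fin.val_last]
  ring

theorem part1 (e n : ℕ) (N : ℕ) (P : Finset (ℝ × ℝ)) (hcard : P.card = N)
    (hgen : KGenPos (e+1) P) (hno : ∀ S ⊆ P, S.card = n → ¬ KOrderMonotone (e+1) S) :
    ∃ q : Fin N → Fin (e+1) → ℝ, GenPosSeq q ∧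
      ∀ ι : Fin n → Fin N, StrictMono ι → ¬ OTHomog (q ∘ ι) := by
  classical
  -- enumerate P in increasing order of x-coordinates
  have hXcard : (P.image Prod.fst).card = N := by
    rw [Finset.card_image_of_injOn, hcard]
    intro u hu v hv huv
    exact hgen.1 u (by simpa using hu) v (by simpa using hv) huv
  have hmemX : ∀ i : Fin N, (P.image Prod.fst).orderEmbOfFin hXcard i ∈ P.image Prod.fst :=
    fun i => Finset.orderEmbOfFin_mem _ hXcard i
  choose p hpP hpfst using fun i => Finset.mem_image.mp (hmemX i)
  have hpx : StrictMono fun i => (p i).1 := by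
    intro i j hij
    show (p i).1 < (p j).1
    rw [hpfst i, hpfst j]
    exact ((P.image Prod.fst).orderEmbOfFin hXcard).strictMono hij
  have hpinj : Function.Injective p := fun i j h => hpx.injective (by rw [h])
  set q : Fin N → Fin (e+1) → ℝ :=
    fun i => Fin.snoc (fun j : Fin e => (p i).1 ^ ((j:ℕ)+1)) (p i).2 with hqdef
  refine ⟨q, ?_, ?_⟩
  · -- general position
    intro a b ha T hT
    have hsum : ∀ i ∈ T,
        (∑ j : Fin e, a j.castSucc * (p i).1 ^ ((j:ℕ)+1)) + a (Fin.last e) * (p i).2 = b := by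
      intro i hi
      have h := hT i hi
      rw [hqdef] at h
      simpa only [Fin.sum_univ_castSucc, Fin.snoc_castSucc, Fin.snoc_last] using h
    by_cases hlast : a (Fin.last e) = 0
    · -- points lie among roots of a nonzero poly of degree ≤ e
      obtain ⟨j0, hj0⟩ := Function.ne_iff.mp ha
      have hj0' : a j0 ≠ 0 := by simpa using hj0
      have hj0last : j0 ≠ Fin.last e := fun h => hj0' (h ▸ hlast)
      obtain ⟨j1, rfl⟩ := Fin.exists_castSucc_eq.mpr hj0last
      set H : Polynomial ℝ :=
        (∑ j : Fin e, C (a j.castSucc) * Polynomial.X ^ ((j:ℕ)+1)) - C b with hHdef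
      have hH0 : H ≠ 0 := by
        intro h
        have hc : H.coeff ((j1:ℕ)+1) = a j1.castSucc := by
          rw [hHdef, Polynomial.coeff_sub, Polynomial.finset_sum_coeff]
          rw [Finset.sum_eq_single j1]
          · simp [Polynomial.coeff_X_pow]
          · intro j _ hj
            simp only [Polynomial.coeff_C_mul, Polynomial.coeff_X_pow, add_left_inj]
            rw [if_neg, mul_zero]
            exact fun hc => hj (Fin.val_injective hc.symm)
          · simp
        rw [h] at hc
        simp at hc
        exact hj0' hc.symm
      have hroot : ∀ i ∈ T, H.eval ((p i).1) = 0 := by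
        intro i hi
        have h := hsum i hi
        rw [hlast, zero_mul, add_zero] at h
        simp only [hHdef, Polynomial.eval_sub, Polynomial.eval_finset_sum,
          Polynomial.eval_mul, Polynomial.eval_C, Polynomial.eval_pow, Polynomial.eval_X]
        rw [h]; ring
      have hsub : T.image (fun i => (p i).1) ⊆ H.roots.toFinset := by
        intro z hz
        obtain ⟨i, hi, rfl⟩ := Finset.mem_image.mp hz
        rw [Multiset.mem_toFinset, Polynomial.mem_roots hH0]
        exact hroot i hi
      have hdegH : H.natDegree ≤ e := by
        apply le_trans (Polynomial.natDegree_sub_le _ _)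
        simp only [Polynomial.natDegree_C, max_le_iff]
        constructor
        · apply Polynomial.natDegree_sum_le_of_forall_le
          intro j _
          apply le_trans (Polynomial.natDegree_C_mul_le _ _)
          rw [Polynomial.natDegree_X_pow]
          omega
        · omega
      have himg : (T.image (fun i => (p i).1)).card = T.card :=
        Finset.card_image_of_injOn (fun u _ v _ h => hpx.injective h)
      calc T.card = (T.image (fun i => (p i).1)).card := himg.symm
        _ ≤ H.roots.toFinset.card := Finset.card_le_card hsub
        _ ≤ Multiset.card H.roots := Multiset.toFinset_card_le _
        _ ≤ H.natDegree := Polynomial.card_roots' H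
        _ ≤ e + 1 := by omega
    · -- points lie on the graph of a polynomial of degree < e+1
      set g : Polynomial ℝ := C (a (Fin.last e))⁻¹ *
        (C b - ∑ j : Fin e, C (a j.castSucc) * Polynomial.X ^ ((j:ℕ)+1)) with hgdef
      have hdeg : g.degree < ((e+1 : ℕ) : WithBot ℕ) := by
        rw [Polynomial.degree_lt_iff_coeff_zero]
        intro m hm
        have hm' : (e+1 : ℕ) ≤ m := by exact_mod_cast hm
        rw [hgdef, Polynomial.coeff_C_mul, Polynomial.coeff_sub,
          Polynomial.finset_sum_coeff]
        rw [Polynomial.coeff_C, if_neg (by omega), Finset.sum_eq_zero, sub_zero, mul_zero]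
        intro j _
        rw [Polynomial.coeff_C_mul, Polynomial.coeff_X_pow, if_neg (by omega), mul_zero]
      have hgraph : ∀ pt ∈ T.image p, Polynomial.eval pt.1 g = pt.2 := by
        intro pt hpt
        obtain ⟨i, hi, rfl⟩ := Finset.mem_image.mp hpt
        have h := hsum i hi
        simp only [hgdef, Polynomial.eval_mul, Polynomial.eval_C, Polynomial.eval_sub,
          Polynomial.eval_finset_sum, Polynomial.eval_pow, Polynomial.eval_X]
        field_simp
        linarith [h]
      have hTP : T.image p ⊆ P := by
        intro pt hpt
        obtain ⟨i, _, rfl⟩ := Finset.mem_image.mp hpt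
        exact hpP i
      have := hgen.2 g hdeg (T.image p) hTP hgraph
      rwa [Finset.card_image_of_injective _ hpinj] at this
  · -- no order-type homogeneous subsequence
    intro ι hι ⟨ε, hε⟩
    set S : Finset (ℝ × ℝ) := Finset.image (fun k => p (ι k)) Finset.univ with hSdef
    have hScard : S.card = n := by
      rw [hSdef, Finset.card_image_of_injective _ (fun u v h => hι.injective (hpinj h)),
        Finset.card_univ, Fintype.card_fin]
    have hSsub : S ⊆ P := by
      intro s hs
      obtain ⟨k, _, rfl⟩ := Finset.mem_image.mp hs
      exact hpP _
    apply hno S hSsub hScard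
    have hkey : ∀ r : Fin (e+2) → ℝ × ℝ, (∀ i, r i ∈ S) →
        StrictMono (fun i => (r i).1) → Real.sign (divdiff (e+1) r) = ε := by
      intro r hrS hrx
      choose k _ hk using fun i => Finset.mem_image.mp (hrS i)
      have hkmono : StrictMono k := by
        intro i j hij
        have h1 : (r i).1 < (r j).1 := hrx hij
        rw [← hk i, ← hk j] at h1
        exact hι.lt_iff_lt.mp ((hpx.lt_iff_lt).mp h1)
      have hdet := hε k hkmono
      simp only [Function.comp_apply] at hdet
      have hmat : (fun i => q (ι (k i))) =
          fun c => Fin.snoc (fun j : Fin e => ((r c).1) ^ ((j:ℕ)+1)) ((r c).2) := by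
        funext c
        rw [← hk c]
      rw [hmat, det_lift e (fun i => (r i).1) (fun i => (r i).2) hrx.injective] at hdet
      have hV : 0 < ∏ i : Fin (e+2), ∏ j ∈ Finset.Ioi i, ((r j).1 - (r i).1) := by
        apply Finset.prod_pos
        intro i _
        apply Finset.prod_pos
        intro j hj
        exact sub_pos.mpr (hrx (Finset.mem_Ioi.mp hj))
      have heta : (fun i => ((r i).1, (r i).2)) = r := funext fun i => rfl
      rw [heta] at hdet
      rcases lt_trichotomy (divdiff (e+1) r) 0 with h|h|h
      · rw [Real.sign_of_neg h]
        rw [Real.sign_of_neg (mul_neg_of_pos_of_neg hV h)] at hdet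
        exact hdet
      · rw [h, Real.sign_zero]
        rw [h, mul_zero, Real.sign_zero] at hdet
        exact hdet
      · rw [Real.sign_of_pos h]
        rw [Real.sign_of_pos (mul_pos hV h)] at hdet
        exact hdet
    by_cases hε1 : ε = -1
    · right
      intro r h1 h2
      have hs := hkey r h1 h2
      rw [hε1] at hs
      by_contra hpos
      push_neg at hpos
      rcases lt_trichotomy (divdiff (e+1) r) 0 with h|h|h
      · linarith
      · rw [h, Real.sign_zero] at hs; norm_num at hs
      · rw [Real.sign_of_pos h] at hs; norm_num at hs
    · left
      intro r h1 h2
      have hs := hkey r h1 h2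
      by_contra hneg
      push_neg at hneg
      rw [Real.sign_of_neg hneg] at hs
      exact hε1 hs.symm

def RamseyP (k p q N : ℕ) : Prop :=
  ∀ (α : Type) [DecidableEq α] (f : Finset α → Bool) (V : Finset α), N ≤ V.card →
    (∃ S ⊆ V, p ≤ S.card ∧ ∀ T ⊆ S, T.card = k → f T = true) ∨
    (∃ S ⊆ V, q ≤ S.card ∧ ∀ T ⊆ S, T.card = k → f T = false)

theorem ramsey_zero (p q : ℕ) : RamseyP 0 p q (max p q) := by
  intro α _ f V hV
  cases hfe : f ∅ with
  | true =>
    left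
    exact ⟨V, Finset.Subset.refl V, le_trans (le_max_left _ _) hV,
      fun T _ hc => by rw [Finset.card_eq_zero.mp hc]; exact hfe⟩
  | false =>
    right
    exact ⟨V, Finset.Subset.refl V, le_trans (le_max_right _ _) hV,
      fun T _ hc => by rw [Finset.card_eq_zero.mp hc]; exact hfe⟩

theorem ramsey_left (k q : ℕ) : RamseyP (k+1) 0 q 0 := by
  intro α _ f V _
  left
  refine ⟨∅, Finset.empty_subset V, le_refl 0, fun T hT hc => ?_⟩
  rw [Finset.subset_empty.mp hT] at hc
  simp at hc

theorem ramsey_right (k p : ℕ) : RamseyP (k+1) p 0 0 := by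
  intro α _ f V _
  right
  refine ⟨∅, Finset.empty_subset V, le_refl 0, fun T hT hc => ?_⟩
  rw [Finset.subset_empty.mp hT] at hc
  simp at hc

theorem ramsey_step (k p q N₁ N₂ M : ℕ)
    (h1 : RamseyP (k+1) p (q+1) N₁) (h2 : RamseyP (k+1) (p+1) q N₂)
    (h3 : RamseyP k N₁ N₂ M) : RamseyP (k+1) (p+1) (q+1) (M+1) := by
  intro α _ f V hV
  obtain ⟨v, hv⟩ : V.Nonempty := Finset.card_pos.mp (by omega)
  have hV' : M ≤ (V.erase v).card := by rw [Finset.card_erase_of_mem hv]; omega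
  rcases h3 α (fun K => f (insert v K)) (V.erase v) hV' with
    ⟨U, hUV, hUcard, hU⟩ | ⟨U, hUV, hUcard, hU⟩
  · rcases h1 α f U hUcard with ⟨S, hSU, hScard, hS⟩ | ⟨S, hSU, hScard, hS⟩
    · left
      have hvS : v ∉ S := fun h => (Finset.notMem_erase v V) (hUV (hSU h))
      refine ⟨insert v S, ?_, ?_, ?_⟩
      · intro x hx
        rcases Finset.mem_insert.mp hx with rfl | hx
        · exact hv
        · exact (Finset.erase_subset v V) (hUV (hSU hx))
      · rw [Finset.card_insert_of_notMem hvS]; omega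
      · intro T hT hTc
        by_cases hvT : v ∈ T
        · have hKsub : T.erase v ⊆ S := by
            intro x hx
            have hm := Finset.mem_erase.mp hx
            exact (Finset.mem_insert.mp (hT hm.2)).resolve_left hm.1
          have hKcard : (T.erase v).card = k := by
            rw [Finset.card_erase_of_mem hvT, hTc]; omega
          have h5 : f (insert v (T.erase v)) = true :=
            hU (T.erase v) (hKsub.trans hSU) hKcard
          rwa [Finset.insert_erase hvT] at h5
        · refine hS T (fun x hx => ?_) hTc
          exact (Finset.mem_insert.mp (hT hx)).resolve_left (fun h => hvT (h ▸ hx))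
    · right
      exact ⟨S, (hSU.trans hUV).trans (Finset.erase_subset v V), hScard, hS⟩
  · rcases h2 α f U hUcard with ⟨S, hSU, hScard, hS⟩ | ⟨S, hSU, hScard, hS⟩
    · left
      exact ⟨S, (hSU.trans hUV).trans (Finset.erase_subset v V), hScard, hS⟩
    · right
      have hvS : v ∉ S := fun h => (Finset.notMem_erase v V) (hUV (hSU h))
      refine ⟨insert v S, ?_, ?_, ?_⟩
      · intro x hx
        rcases Finset.mem_insert.mp hx with rfl | hx
        · exact hv
        · exact (Finset.erase_subset v V) (hUV (hSU hx))
      · rw [Finset.card_insert_of_notMem hvS]; omega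
      · intro T hT hTc
        by_cases hvT : v ∈ T
        · have hKsub : T.erase v ⊆ S := by
            intro x hx
            have hm := Finset.mem_erase.mp hx
            exact (Finset.mem_insert.mp (hT hm.2)).resolve_left hm.1
          have hKcard : (T.erase v).card = k := by
            rw [Finset.card_erase_of_mem hvT, hTc]; omega
          have h5 : f (insert v (T.erase v)) = false :=
            hU (T.erase v) (hKsub.trans hSU) hKcard
          rwa [Finset.insert_erase hvT] at h5
        · refine hS T (fun x hx => ?_) hTc
          exact (Finset.mem_insert.mp (hT hx)).resolve_left (fun h => hvT (h ▸ hx))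

theorem ramsey_exists : ∀ k p q : ℕ, ∃ N, RamseyP k p q N := by
  intro k
  induction k with
  | zero => exact fun p q => ⟨max p q, ramsey_zero p q⟩
  | succ k ihk =>
    have H : ∀ r p q, p + q ≤ r → ∃ N, RamseyP (k+1) p q N := by
      intro r
      induction r with
      | zero =>
        intro p q hpq
        have hp : p = 0 := by omega
        subst hp
        exact ⟨0, ramsey_left k q⟩
      | succ r ihr =>
        intro p q hpq
        match p, q with
        | 0, q => exact ⟨0, ramsey_left k q⟩
        | p+1, 0 => exact ⟨0, ramsey_right k (p+1)⟩
        | p+1, q+1 =>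
          obtain ⟨N₁, h1⟩ := ihr p (q+1) (by omega)
          obtain ⟨N₂, h2⟩ := ihr (p+1) q (by omega)
          obtain ⟨M, h3⟩ := ihk N₁ N₂
          exact ⟨M+1, ramsey_step k p q N₁ N₂ M h1 h2 h3⟩
    exact fun p q => H (p+q) p q le_rfl

theorem det_ne_zero_of_genpos {d N : ℕ} (qq : Fin N → Fin d → ℝ) (hq : GenPosSeq qq)
    (σ : Fin (d+1) → Fin N) (hσ : Function.Injective σ) :
    (otMat fun i => qq (σ i)).det ≠ 0 := by
  classical
  intro h0
  obtain ⟨v, hv0, hv⟩ := Matrix.exists_vecMul_eq_zero_iff.mpr h0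
  have hcol : ∀ j : Fin (d+1), v 0 + ∑ r : Fin d, v r.succ * qq (σ j) r = 0 := by
    intro j
    have h := congrFun hv j
    simp only [Matrix.vecMul, dotProduct, otMat, Matrix.of_apply, Pi.zero_apply] at h
    rw [Fin.sum_univ_succ] at h
    simpa using h
  have ha : (fun r : Fin d => v r.succ) ≠ 0 := by
    intro h
    apply hv0
    funext r
    refine Fin.cases ?_ (fun r' => ?_) r
    · have h1 := hcol 0
      have h2 : ∀ r : Fin d, v r.succ = 0 := fun r => congrFun h r
      rw [Finset.sum_eq_zero (fun r _ => by rw [h2 r, zero_mul]), add_zero] at h1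
      exact h1
    · exact congrFun h r'
  have hcard := hq (fun r => v r.succ) (- v 0) ha (Finset.image σ Finset.univ)
    (by
      intro i hi
      obtain ⟨j, _, rfl⟩ := Finset.mem_image.mp hi
      have := hcol j
      linarith [this])
  rw [Finset.card_image_of_injective _ hσ, Finset.card_univ, Fintype.card_fin] at hcard
  omega

theorem exists_OT_mem (d n : ℕ) : ∃ N₀ : ℕ, ∀ qq : Fin N₀ → Fin d → ℝ, GenPosSeq qq →
    ∃ ι : Fin n → Fin N₀, StrictMono ι ∧ OTHomog (qq ∘ ι) := by
  classical
  obtain ⟨N₀, hR⟩ := ramsey_exists (d+1) n n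
  refine ⟨N₀, fun qq hq => ?_⟩
  have key : ∀ (S : Finset (Fin N₀)) (c : Bool), n ≤ S.card →
      (∀ T ⊆ S, T.card = d+1 →
        (if h : T.card = d+1 then
          decide (0 < (otMat fun i => qq (T.orderEmbOfFin h i)).det) else true) = c) →
      ∃ ι : Fin n → Fin N₀, StrictMono ι ∧ OTHomog (qq ∘ ι) := by
    intro S c hScard hS
    obtain ⟨Sn, hsub, hcard⟩ := Finset.exists_subset_card_eq hScard
    refine ⟨Sn.orderEmbOfFin hcard, (Sn.orderEmbOfFin hcard).strictMono,
      (if c then 1 else -1), ?_⟩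
    intro σ hσ
    set T : Finset (Fin N₀) :=
      Finset.image (fun i => Sn.orderEmbOfFin hcard (σ i)) Finset.univ with hTdef
    have hTcard : T.card = d+1 := by
      rw [hTdef, Finset.card_image_of_injective _
        (fun u w h => hσ.injective ((Sn.orderEmbOfFin hcard).injective h)),
        Finset.card_univ, Fintype.card_fin]
    have hTS : T ⊆ S := by
      intro x hx
      obtain ⟨i, _, rfl⟩ := Finset.mem_image.mp hx
      exact hsub (Finset.orderEmbOfFin_mem Sn hcard (σ i))
    have henum : (fun i => Sn.orderEmbOfFin hcard (σ i)) = T.orderEmbOfFin hTcard := by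
      apply Finset.orderEmbOfFin_unique hTcard
      · intro i
        rw [hTdef]
        exact Finset.mem_image_of_mem _ (Finset.mem_univ i)
      · exact (Sn.orderEmbOfFin hcard).strictMono.comp hσ
    have hcolor := hS T hTS hTcard
    rw [dif_pos hTcard, ← henum] at hcolor
    have hne : (otMat fun i => qq (Sn.orderEmbOfFin hcard (σ i))).det ≠ 0 :=
      det_ne_zero_of_genpos qq hq _
        (fun u w h => hσ.injective ((Sn.orderEmbOfFin hcard).injective h))
    have hcomp : (fun i => (qq ∘ (Sn.orderEmbOfFin hcard)) (σ i)) =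
        (fun i => qq (Sn.orderEmbOfFin hcard (σ i))) := rfl
    rw [hcomp]
    cases c with
    | true =>
      have : 0 < (otMat fun i => qq (Sn.orderEmbOfFin hcard (σ i))).det := by
        simpa using hcolor
      simp [Real.sign_of_pos this]
    | false =>
      have hng : ¬ 0 < (otMat fun i => qq (Sn.orderEmbOfFin hcard (σ i))).det := by
        simpa using hcolor
      have : (otMat fun i => qq (Sn.orderEmbOfFin hcard (σ i))).det < 0 :=
        lt_of_le_of_ne (not_lt.mp hng) hne
      simp [Real.sign_of_neg this]
  rcases hR (Fin N₀) (fun T => if h : T.card = d+1 then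
      decide (0 < (otMat fun i => qq (T.orderEmbOfFin h i)).det) else true)
      Finset.univ (by simp) with ⟨S, _, hScard, hS⟩ | ⟨S, _, hScard, hS⟩
  · exact key S true hScard hS
  · exact key S false hScard hS

/-- **Proposition 1.6**: for `d ≥ 1` and any `n`, from any `N`-point planar set in `d`-general
position with no `n`-point `d`-th order monotone subset one obtains a sequence of `N` points
in `ℝ^d` in general position with no order-type homogeneous subsequence of `n` points;
consequently `OT_d(n) ≥ ES_d(n)`. -/
theorem stmt15 (d n : ℕ) (hd : 1 ≤ d) :
    (∀ N : ℕ,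
      (∃ P : Finset (ℝ × ℝ), P.card = N ∧ KGenPos d P ∧
        ∀ S ⊆ P, S.card = n → ¬ KOrderMonotone d S) →
      ∃ q : Fin N → Fin d → ℝ, GenPosSeq q ∧
        ∀ ι : Fin n → Fin N, StrictMono ι → ¬ OTHomog (q ∘ ι)) ∧
    ES d n ≤ OT d n := by
  obtain ⟨e, rfl⟩ : ∃ e, d = e + 1 := ⟨d - 1, by omega⟩
  have hpart1 : ∀ N : ℕ,
      (∃ P : Finset (ℝ × ℝ), P.card = N ∧ KGenPos (e+1) P ∧
        ∀ S ⊆ P, S.card = n → ¬ KOrderMonotone (e+1) S) →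
      ∃ q : Fin N → Fin (e+1) → ℝ, GenPosSeq q ∧
        ∀ ι : Fin n → Fin N, StrictMono ι → ¬ OTHomog (q ∘ ι) := by
    rintro N ⟨P, hcard, hgen, hno⟩
    exact part1 e n N P hcard hgen hno
  refine ⟨hpart1, ?_⟩
  have hsub : {N | ∀ qq : Fin N → Fin (e+1) → ℝ, GenPosSeq qq →
        ∃ ι : Fin n → Fin N, StrictMono ι ∧ OTHomog (qq ∘ ι)} ⊆
      {N | ∀ P : Finset (ℝ × ℝ), P.card = N → KGenPos (e+1) P →
        ∃ S ⊆ P, S.card = n ∧ KOrderMonotone (e+1) S} := by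
    intro N hN P hcard hgen
    by_contra hc
    push_neg at hc
    obtain ⟨q, hq, hnoh⟩ := hpart1 N ⟨P, hcard, hgen, hc⟩
    obtain ⟨ι, hι, hh⟩ := hN q hq
    exact hnoh ι hι hh
  obtain ⟨N₀, hN₀⟩ := exists_OT_mem (e+1) n
  have hOTne : {N | ∀ qq : Fin N → Fin (e+1) → ℝ, GenPosSeq qq →
      ∃ ι : Fin n → Fin N, StrictMono ι ∧ OTHomog (qq ∘ ι)}.Nonempty := ⟨N₀, hN₀⟩
  unfold ES OT
  exact Nat.sInf_le (hsub (Nat.sInf_mem hOTne))
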